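/- Let Q be a symmetric positive semidefinite n×n real matrix, σ > 0, J ⊆ {1,…,n} an index set, and let Σ be the diagonal matrix with Σᵢᵢ = 1 if i ∈ J and Σᵢᵢ = 0 otherwise. Let s ∈ ℝⁿ and set g := Qs. Suppose d̂ lies in the column space Ran(Q) of Q and satisfies (Q + σ Q Σ Q) d̂ = −g, and suppose v : J → ℝ satisfies the p×p linear system σ⁻¹ vᵢ + ∑_{j∈J} Qᵢⱼ vⱼ = gᵢ for every i ∈ J (where p = |J|). Then: (i) for every i ∈ {1,…,n}, (Q d̂)ᵢ = ∑_{j∈J} Qᵢⱼ vⱼ − gᵢ; and (ii) ⟪d̂, Q d̂⟫ = ∑_{i∈J} ∑_{j∈J} vᵢ Qᵢⱼ vⱼ − 2 ∑_{i∈J} vᵢ gᵢ + ⟪s, Q s⟫. -/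

import Mathlib

open Matrix

private lemma sum_ite_mem_eq {n : ℕ} (J : Finset (Fin n)) (f : Fin n → ℝ) :
    ∑ j : Fin n, (if j ∈ J then f j else 0) = ∑ j ∈ J, f j := by
  rw [Finset.sum_ite_mem, Finset.univ_inter]

/-- Sparse reduction of the semismooth Newton system, case `aᵀΣa = 0` (`𝒫 = Σ`):
with `g = Qs`, if `d̂ ∈ Ran Q` solves `(Q + σQΣQ)d̂ = −g` and `v` solves the small system
`σ⁻¹vᵢ + ∑_{j∈J} Qᵢⱼvⱼ = gᵢ (i ∈ J)`, then `Qd̂` and `d̂ᵀQd̂` are given by the sparse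
formulas. -/
theorem newton_system_sparse_reduction_degenerate {n : ℕ}
    (Q : Matrix (Fin n) (Fin n) ℝ) (hQ : Q.PosSemidef) (σ : ℝ) (hσ : 0 < σ)
    (J : Finset (Fin n)) (s : Fin n → ℝ) (dhat : Fin n → ℝ)
    (hran : ∃ y, Q.mulVec y = dhat)
    (hd : (Q + σ • (Q * Matrix.diagonal (fun i => if i ∈ J then (1 : ℝ) else 0) * Q)).mulVec
        dhat = -(Q.mulVec s))
    (v : Fin n → ℝ)
    (hv : ∀ i ∈ J, σ⁻¹ * v i + ∑ j ∈ J, Q i j * v j = Q.mulVec s i) :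
    (∀ i, Q.mulVec dhat i = (∑ j ∈ J, Q i j * v j) - Q.mulVec s i) ∧
    dhat ⬝ᵥ Q.mulVec dhat =
      (∑ i ∈ J, ∑ j ∈ J, v i * Q i j * v j) - 2 * (∑ i ∈ J, v i * Q.mulVec s i) +
        s ⬝ᵥ Q.mulVec s := by
  obtain ⟨hHerm, hpsd⟩ := hQ
  have hsym : ∀ i j, Q j i = Q i j := fun i j => by
    have := hHerm.apply i j; simpa using this
  have hσ' : σ * σ⁻¹ = 1 := mul_inv_cancel₀ hσ.ne'
  set u : Fin n → ℝ := Q.mulVec dhat with hu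
  set g : Fin n → ℝ := Q.mulVec s with hg
  have humem : ∀ i, u i = ∑ j, Q i j * dhat j := fun i => rfl
  have hgmem : ∀ i, g i = ∑ j, Q i j * s j := fun i => rfl
  set D : Matrix (Fin n) (Fin n) ℝ :=
    Matrix.diagonal (fun i => if i ∈ J then (1 : ℝ) else 0) with hDdef
  -- Step A : componentwise form of the big Newton equation
  have hQDQ : ∀ (y : Fin n → ℝ) (i : Fin n),
      (Q * D * Q).mulVec y i = ∑ j ∈ J, Q i j * (Q.mulVec y) j := by
    intro y i
    rw [← Matrix.mulVec_mulVec, ← Matrix.mulVec_mulVec]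
    have : ∀ k, D.mulVec (Q.mulVec y) k
        = (if k ∈ J then (Q.mulVec y) k else 0) := by
      intro k
      rw [hDdef, Matrix.mulVec_diagonal]
      by_cases hk : k ∈ J <;> simp [hk]
    calc Q.mulVec (D.mulVec (Q.mulVec y)) i
        = ∑ j, Q i j * (D.mulVec (Q.mulVec y)) j := rfl
      _ = ∑ j, (if j ∈ J then Q i j * (Q.mulVec y) j else 0) := by
          refine Finset.sum_congr rfl fun j _ => ?_
          rw [this j]; by_cases hj : j ∈ J <;> simp [hj]
      _ = ∑ j ∈ J, Q i j * (Q.mulVec y) j := sum_ite_mem_eq _ _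
  have hA : ∀ i, u i + σ * ∑ j ∈ J, Q i j * u j = -g i := by
    intro i
    have h := congrFun hd i
    rw [Matrix.add_mulVec, Matrix.smul_mulVec] at h
    have h' : u i + σ * (Q * D * Q).mulVec dhat i = -g i := by
      simpa [hu, hg] using h
    rwa [hQDQ dhat i] at h'
  -- Step B : the difference w := u + σ⁻¹ v satisfies the homogeneous small system on J
  set w : Fin n → ℝ := fun i => u i + σ⁻¹ * v i with hwdef
  have hw : ∀ i ∈ J, w i + σ * ∑ j ∈ J, Q i j * w j = 0 := by
    intro i hi
    have h1 := hA i
    have h2 := hv i hi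
    have hs : ∑ j ∈ J, Q i j * w j
        = (∑ j ∈ J, Q i j * u j) + σ⁻¹ * ∑ j ∈ J, Q i j * v j := by
      rw [Finset.mul_sum, ← Finset.sum_add_distrib]
      exact Finset.sum_congr rfl fun j _ => by simp [hwdef]; ring
    rw [hwdef]
    simp only []
    rw [hs]
    linear_combination h1 + h2 + (∑ j ∈ J, Q i j * v j) * hσ'
  -- Step C : w vanishes on J, by positive semidefiniteness
  set x : Fin n → ℝ := fun i => if i ∈ J then w i else 0 with hxdef
  have hx : x ⬝ᵥ Q.mulVec x = ∑ i ∈ J, w i * ∑ j ∈ J, Q i j * w j := by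
    have hinner : ∀ i, Q.mulVec x i = ∑ j ∈ J, Q i j * w j := by
      intro i
      calc Q.mulVec x i = ∑ j, Q i j * x j := rfl
        _ = ∑ j, (if j ∈ J then Q i j * w j else 0) := by
            refine Finset.sum_congr rfl fun j _ => ?_
            rw [hxdef]; by_cases hj : j ∈ J <;> simp [hj]
        _ = ∑ j ∈ J, Q i j * w j := sum_ite_mem_eq _ _
    calc x ⬝ᵥ Q.mulVec x = ∑ i, x i * Q.mulVec x i := rfl
      _ = ∑ i, (if i ∈ J then w i * ∑ j ∈ J, Q i j * w j else 0) := by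
          refine Finset.sum_congr rfl fun i _ => ?_
          rw [hinner i, hxdef]; by_cases hi : i ∈ J <;> simp [hi]
      _ = ∑ i ∈ J, w i * ∑ j ∈ J, Q i j * w j := sum_ite_mem_eq _ _
  have hx0 : 0 ≤ x ⬝ᵥ Q.mulVec x := by simpa using (show Q.PosSemidef from ⟨hHerm, hpsd⟩).dotProduct_mulVec_nonneg x
  have hzero : ∑ i ∈ J, w i * (w i + σ * ∑ j ∈ J, Q i j * w j) = 0 :=
    Finset.sum_eq_zero fun i hi => by rw [hw i hi, mul_zero]
  have hsplit : ∑ i ∈ J, w i * (w i + σ * ∑ j ∈ J, Q i j * w j)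
      = (∑ i ∈ J, w i ^ 2) + σ * (x ⬝ᵥ Q.mulVec x) := by
    rw [hx, Finset.mul_sum, ← Finset.sum_add_distrib]
    exact Finset.sum_congr rfl fun i _ => by ring
  have hsq : ∑ i ∈ J, w i ^ 2 = 0 := by
    have h1 : (∑ i ∈ J, w i ^ 2) + σ * (x ⬝ᵥ Q.mulVec x) = 0 := by
      rw [← hsplit]; exact hzero
    have h2 : 0 ≤ σ * (x ⬝ᵥ Q.mulVec x) := mul_nonneg hσ.le hx0
    have h3 : 0 ≤ ∑ i ∈ J, w i ^ 2 := Finset.sum_nonneg fun i _ => sq_nonneg _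
    linarith
  have hwz : ∀ i ∈ J, w i = 0 := by
    intro i hi
    have := (Finset.sum_eq_zero_iff_of_nonneg fun j _ => sq_nonneg (w j)).mp hsq i hi
    exact (pow_eq_zero_iff two_ne_zero).mp this
  have huJ : ∀ i ∈ J, u i = -(σ⁻¹ * v i) := by
    intro i hi
    have := hwz i hi
    rw [hwdef] at this
    simp only [] at this
    linarith
  -- Part (i)
  have parti : ∀ i, u i = (∑ j ∈ J, Q i j * v j) - g i := by
    intro i
    have h1 := hA i
    have h2 : ∑ j ∈ J, Q i j * u j = ∑ j ∈ J, (-σ⁻¹) * (Q i j * v j) :=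
      Finset.sum_congr rfl fun j hj => by rw [huJ j hj]; ring
    rw [h2, ← Finset.mul_sum] at h1
    linear_combination h1 + (∑ j ∈ J, Q i j * v j) * hσ'
  refine ⟨fun i => parti i, ?_⟩
  -- Part (ii)
  have swap1 : ∑ i, dhat i * (∑ j ∈ J, Q i j * v j) = ∑ j ∈ J, v j * u j := by
    calc ∑ i, dhat i * (∑ j ∈ J, Q i j * v j)
        = ∑ i, ∑ j ∈ J, dhat i * (Q i j * v j) := by
          exact Finset.sum_congr rfl fun i _ => Finset.mul_sum _ _ _
      _ = ∑ j ∈ J, ∑ i, dhat i * (Q i j * v j) := Finset.sum_comm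
      _ = ∑ j ∈ J, v j * u j := by
          refine Finset.sum_congr rfl fun j _ => ?_
          rw [humem j, Finset.mul_sum]
          exact Finset.sum_congr rfl fun i _ => by rw [hsym j i]; ring
  have swap2 : ∑ i, dhat i * g i = ∑ j, s j * u j := by
    calc ∑ i, dhat i * g i = ∑ i, ∑ j, dhat i * (Q i j * s j) := by
          refine Finset.sum_congr rfl fun i _ => ?_
          rw [hgmem i, Finset.mul_sum]
      _ = ∑ j, ∑ i, dhat i * (Q i j * s j) := Finset.sum_comm
      _ = ∑ j, s j * u j := by
          refine Finset.sum_congr rfl fun j _ => ?_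
          rw [humem j, Finset.mul_sum]
          exact Finset.sum_congr rfl fun i _ => by rw [hsym j i]; ring
  have swap3 : ∑ j, s j * (∑ k ∈ J, Q j k * v k) = ∑ k ∈ J, v k * g k := by
    calc ∑ j, s j * (∑ k ∈ J, Q j k * v k)
        = ∑ j, ∑ k ∈ J, s j * (Q j k * v k) := by
          exact Finset.sum_congr rfl fun j _ => Finset.mul_sum _ _ _
      _ = ∑ k ∈ J, ∑ j, s j * (Q j k * v k) := Finset.sum_comm
      _ = ∑ k ∈ J, v k * g k := by
          refine Finset.sum_congr rfl fun k _ => ?_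
          rw [hgmem k, Finset.mul_sum]
          exact Finset.sum_congr rfl fun j _ => by rw [hsym k j]; ring
  have hsu : ∑ j, s j * u j = (∑ k ∈ J, v k * g k) - ∑ j, s j * g j := by
    calc ∑ j, s j * u j = ∑ j, (s j * (∑ k ∈ J, Q j k * v k) - s j * g j) := by
          refine Finset.sum_congr rfl fun j _ => ?_
          rw [parti j]; ring
      _ = (∑ j, s j * (∑ k ∈ J, Q j k * v k)) - ∑ j, s j * g j := by
          rw [Finset.sum_sub_distrib]
      _ = (∑ k ∈ J, v k * g k) - ∑ j, s j * g j := by rw [swap3]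
  have hvu : ∑ j ∈ J, v j * u j = -(σ⁻¹ * ∑ j ∈ J, v j ^ 2) := by
    rw [Finset.mul_sum, ← Finset.sum_neg_distrib]
    exact Finset.sum_congr rfl fun j hj => by rw [huJ j hj]; ring
  have hlhs : dhat ⬝ᵥ u
      = -(σ⁻¹ * ∑ j ∈ J, v j ^ 2) - (∑ k ∈ J, v k * g k) + ∑ j, s j * g j := by
    calc dhat ⬝ᵥ u = ∑ i, dhat i * u i := rfl
      _ = ∑ i, (dhat i * (∑ j ∈ J, Q i j * v j) - dhat i * g i) := by
          refine Finset.sum_congr rfl fun i _ => ?_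
          rw [parti i]; ring
      _ = (∑ i, dhat i * (∑ j ∈ J, Q i j * v j)) - ∑ i, dhat i * g i := by
          rw [Finset.sum_sub_distrib]
      _ = (∑ j ∈ J, v j * u j) - ∑ j, s j * u j := by rw [swap1, swap2]
      _ = -(σ⁻¹ * ∑ j ∈ J, v j ^ 2) - (∑ k ∈ J, v k * g k) + ∑ j, s j * g j := by
          rw [hvu, hsu]; ring
  have hrhs1 : ∑ i ∈ J, ∑ j ∈ J, v i * Q i j * v j
      = (∑ i ∈ J, v i * g i) - σ⁻¹ * ∑ i ∈ J, v i ^ 2 := by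
    calc ∑ i ∈ J, ∑ j ∈ J, v i * Q i j * v j
        = ∑ i ∈ J, v i * (∑ j ∈ J, Q i j * v j) := by
          refine Finset.sum_congr rfl fun i _ => ?_
          rw [Finset.mul_sum]
          exact Finset.sum_congr rfl fun j _ => by ring
      _ = ∑ i ∈ J, v i * (g i - σ⁻¹ * v i) := by
          refine Finset.sum_congr rfl fun i hi => ?_
          have := hv i hi
          congr 1
          linarith
      _ = (∑ i ∈ J, v i * g i) - σ⁻¹ * ∑ i ∈ J, v i ^ 2 := by
          rw [Finset.mul_sum, ← Finset.sum_sub_distrib]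
          exact Finset.sum_congr rfl fun i _ => by ring
  have hsg : s ⬝ᵥ g = ∑ j, s j * g j := rfl
  rw [hlhs, hrhs1, hsg]
  ring
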